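/- arXiv:1307.8095 — 4 statements merged into one kernel-verified Lean document; each statement's English description precedes it below -/
import Mathlib

section
/- Let β₁, β₂ be complex numbers with Re β₁ > -1 and Re β₂ > -1. If φ̂₁(ζ) = ζ^{β₁} g₁(ζ) and φ̂₂(ζ) = ζ^{β₂} g₂(ζ) with g₁, g₂ holomorphic near 0, then the convolution φ̂₁*φ̂₂(ζ) := ∫₀¹ φ̂₁((1-t)ζ) φ̂₂(tζ) ζ dt defines a germ of the form ζ^{β₁+β₂+1} g(ζ) with g holomorphic near 0. -/
open Complex MeasureTheory intervalIntegral

/-- convolution of two germs of the form `ζ^β·(holomorphic)` with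
`Re β₁, Re β₂ > -1` is of the form `ζ^(β₁+β₂+1)·(holomorphic)`. -/
theorem convolution_of_monomial_germs
    (β₁ β₂ : ℂ) (h₁ : -1 < β₁.re) (h₂ : -1 < β₂.re)
    (g₁ g₂ : ℂ → ℂ) (r₀ : ℝ) (hr₀ : 0 < r₀)
    (hg₁ : AnalyticOnNhd ℂ g₁ (Metric.ball 0 r₀))
    (hg₂ : AnalyticOnNhd ℂ g₂ (Metric.ball 0 r₀)) :
    ∃ r : ℝ, 0 < r ∧ ∃ g : ℂ → ℂ, AnalyticOnNhd ℂ g (Metric.ball 0 r) ∧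
      ∀ ζ : ℂ, ζ ∈ Metric.ball (0:ℂ) r → ζ ≠ 0 →
        (∫ t in (0:ℝ)..1,
          (((1 - t : ℝ) : ℂ) ^ β₁ * ζ ^ β₁ * g₁ (((1 - t : ℝ) : ℂ) * ζ)) *
          (((t : ℝ) : ℂ) ^ β₂ * ζ ^ β₂ * g₂ (((t : ℝ) : ℂ) * ζ)) * ζ)
        = ζ ^ (β₁ + β₂ + 1) * g ζ := by
  classical
  set r : ℝ := r₀ / 2 with hr_def
  have hr : 0 < r := by positivity
  have hrr₀ : r < r₀ := by rw [hr_def]; linarith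
  -- the compact set where all relevant points live
  set K : Set ℂ := Metric.closedBall 0 r with hK_def
  have hKsub : K ⊆ Metric.ball 0 r₀ := fun z hz => by
    simp only [hK_def, Metric.mem_closedBall, Metric.mem_ball] at *
    linarith
  have hKc : IsCompact K := isCompact_closedBall 0 r
  -- continuity facts
  have hg₁c : ContinuousOn g₁ K := (hg₁.continuousOn).mono hKsub
  have hg₂c : ContinuousOn g₂ K := (hg₂.continuousOn).mono hKsub
  have hg₁d : AnalyticOnNhd ℂ (deriv g₁) (Metric.ball 0 r₀) := hg₁.deriv
  have hg₂d : AnalyticOnNhd ℂ (deriv g₂) (Metric.ball 0 r₀) := hg₂.deriv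
  have hg₁dc : ContinuousOn (deriv g₁) K := (hg₁d.continuousOn).mono hKsub
  have hg₂dc : ContinuousOn (deriv g₂) K := (hg₂d.continuousOn).mono hKsub
  -- bounds
  obtain ⟨C₁, hC₁⟩ := hKc.exists_bound_of_continuousOn hg₁c
  obtain ⟨C₂, hC₂⟩ := hKc.exists_bound_of_continuousOn hg₂c
  obtain ⟨D₁, hD₁⟩ := hKc.exists_bound_of_continuousOn hg₁dc
  obtain ⟨D₂, hD₂⟩ := hKc.exists_bound_of_continuousOn hg₂dc
  have h0K : (0:ℂ) ∈ K := by simp [hK_def, hr.le]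
  have hC₁0 : 0 ≤ C₁ := le_trans (norm_nonneg _) (hC₁ 0 h0K)
  have hC₂0 : 0 ≤ C₂ := le_trans (norm_nonneg _) (hC₂ 0 h0K)
  have hD₁0 : 0 ≤ D₁ := le_trans (norm_nonneg _) (hD₁ 0 h0K)
  have hD₂0 : 0 ≤ D₂ := le_trans (norm_nonneg _) (hD₂ 0 h0K)
  -- the scalar weight
  set c : ℝ → ℂ := fun t => ((1 - t : ℝ) : ℂ) ^ β₁ * ((t : ℝ) : ℂ) ^ β₂ with hc_def
  set B : ℝ → ℂ := fun t => (t : ℂ) ^ (β₂ + 1 - 1) * (1 - (t : ℂ)) ^ (β₁ + 1 - 1) with hB_def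
  have hcB : ∀ t : ℝ, c t = B t := by
    intro t
    simp only [hc_def, hB_def, add_sub_cancel_right]
    push_cast
    rw [mul_comm]
  have hBint : IntervalIntegrable B volume 0 1 :=
    Complex.betaIntegral_convergent (by simp; linarith) (by simp; linarith)
  have hcint : IntervalIntegrable c volume 0 1 := by
    rw [funext hcB]; exact hBint
  have hIoc : Set.uIoc (0:ℝ) 1 = Set.Ioc (0:ℝ) 1 := Set.uIoc_of_le zero_le_one
  have hc_meas : AEStronglyMeasurable c (volume.restrict (Set.uIoc (0:ℝ) 1)) := by
    rw [hIoc]; exact hcint.aestronglyMeasurable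
  -- basic membership facts
  have hnorm_t : ∀ t ∈ Set.Ioc (0:ℝ) 1, ‖((t:ℝ):ℂ)‖ ≤ 1 := by
    intro t ht
    rw [Complex.norm_real, Real.norm_eq_abs, abs_le]
    exact ⟨by linarith [ht.1], ht.2⟩
  have hnorm_1t : ∀ t ∈ Set.Ioc (0:ℝ) 1, ‖((1 - t:ℝ):ℂ)‖ ≤ 1 := by
    intro t ht
    rw [Complex.norm_real, Real.norm_eq_abs, abs_le]
    exact ⟨by linarith [ht.2], by linarith [ht.1]⟩
  have hmemK : ∀ (s : ℝ), |s| ≤ 1 → ∀ x ∈ Metric.ball (0:ℂ) r, ((s:ℝ):ℂ) * x ∈ K := by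
    intro s hs x hx
    simp only [hK_def, Metric.mem_closedBall, dist_zero_right]
    simp only [Metric.mem_ball, dist_zero_right] at hx
    calc ‖((s:ℝ):ℂ) * x‖ = |s| * ‖x‖ := by
          rw [norm_mul, Complex.norm_real, Real.norm_eq_abs]
      _ ≤ 1 * ‖x‖ := by
          exact mul_le_mul_of_nonneg_right hs (norm_nonneg _)
      _ ≤ r := by rw [one_mul]; exact hx.le
  -- the integrand without the power of ζ
  set F : ℂ → ℝ → ℂ := fun ζ t =>
    c t * (g₁ (((1 - t : ℝ) : ℂ) * ζ) * g₂ (((t : ℝ) : ℂ) * ζ)) with hF_def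
  set F' : ℂ → ℝ → ℂ := fun ζ t =>
    c t * ((deriv g₁ (((1 - t : ℝ) : ℂ) * ζ) * ((1 - t : ℝ) : ℂ)) * g₂ (((t : ℝ) : ℂ) * ζ)
      + g₁ (((1 - t : ℝ) : ℂ) * ζ) * (deriv g₂ (((t : ℝ) : ℂ) * ζ) * ((t : ℝ) : ℂ))) with hF'_def
  -- measurability of F x for any x in the ball
  have hF_meas : ∀ x ∈ Metric.ball (0:ℂ) r,
      AEStronglyMeasurable (F x) (volume.restrict (Set.uIoc (0:ℝ) 1)) := by
    intro x hx
    have cont1 : Continuous (fun t : ℝ => ((1 - t : ℝ) : ℂ) * x) :=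
      (Complex.continuous_ofReal.comp (continuous_const.sub continuous_id)).mul continuous_const
    have cont2 : Continuous (fun t : ℝ => ((t : ℝ) : ℂ) * x) :=
      Complex.continuous_ofReal.mul continuous_const
    simp only [hF_def]
    refine hc_meas.mul ?_
    rw [hIoc]
    refine ContinuousOn.aestronglyMeasurable ?_ measurableSet_Ioc
    have h1 : ContinuousOn (fun t : ℝ => g₁ (((1 - t : ℝ) : ℂ) * x)) (Set.Ioc 0 1) := by
      refine hg₁c.comp cont1.continuousOn ?_
      intro t ht
      exact hmemK (1 - t) (by rw [abs_le]; exact ⟨by linarith [ht.2], by linarith [ht.1]⟩) x hx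
    have h2 : ContinuousOn (fun t : ℝ => g₂ (((t : ℝ) : ℂ) * x)) (Set.Ioc 0 1) := by
      refine hg₂c.comp cont2.continuousOn ?_
      intro t ht
      exact hmemK t (by rw [abs_le]; exact ⟨by linarith [ht.1], ht.2⟩) x hx
    exact h1.mul h2
  -- measurability of F' x for any x in the ball
  have hF'_meas : ∀ x ∈ Metric.ball (0:ℂ) r,
      AEStronglyMeasurable (F' x) (volume.restrict (Set.uIoc (0:ℝ) 1)) := by
    intro x hx
    have cont1 : Continuous (fun t : ℝ => ((1 - t : ℝ) : ℂ) * x) :=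
      (Complex.continuous_ofReal.comp (continuous_const.sub continuous_id)).mul continuous_const
    have cont2 : Continuous (fun t : ℝ => ((t : ℝ) : ℂ) * x) :=
      Complex.continuous_ofReal.mul continuous_const
    simp only [hF'_def]
    refine hc_meas.mul ?_
    rw [hIoc]
    refine ContinuousOn.aestronglyMeasurable ?_ measurableSet_Ioc
    have m1 : ∀ t ∈ Set.Ioc (0:ℝ) 1, ((1 - t : ℝ) : ℂ) * x ∈ K := fun t ht =>
      hmemK (1 - t) (by rw [abs_le]; exact ⟨by linarith [ht.2], by linarith [ht.1]⟩) x hx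
    have m2 : ∀ t ∈ Set.Ioc (0:ℝ) 1, ((t : ℝ) : ℂ) * x ∈ K := fun t ht =>
      hmemK t (by rw [abs_le]; exact ⟨by linarith [ht.1], ht.2⟩) x hx
    have h1 : ContinuousOn (fun t : ℝ => g₁ (((1 - t : ℝ) : ℂ) * x)) (Set.Ioc 0 1) :=
      hg₁c.comp cont1.continuousOn m1
    have h2 : ContinuousOn (fun t : ℝ => g₂ (((t : ℝ) : ℂ) * x)) (Set.Ioc 0 1) :=
      hg₂c.comp cont2.continuousOn m2
    have h1' : ContinuousOn (fun t : ℝ => deriv g₁ (((1 - t : ℝ) : ℂ) * x)) (Set.Ioc 0 1) :=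
      hg₁dc.comp cont1.continuousOn m1
    have h2' : ContinuousOn (fun t : ℝ => deriv g₂ (((t : ℝ) : ℂ) * x)) (Set.Ioc 0 1) :=
      hg₂dc.comp cont2.continuousOn m2
    have cont1' : Continuous (fun t : ℝ => ((1 - t : ℝ) : ℂ)) :=
      Complex.continuous_ofReal.comp (continuous_const.sub continuous_id)
    exact ((h1'.mul cont1'.continuousOn).mul h2).add
      (h1.mul (h2'.mul (Complex.continuous_ofReal.continuousOn)))
  -- the uniform bound for F'
  set bound : ℝ → ℝ := fun t => ‖B t‖ * (D₁ * C₂ + C₁ * D₂) with hbound_def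
  have hbound_int : IntervalIntegrable bound volume 0 1 := hBint.norm.mul_const _
  have h_bound : ∀ t ∈ Set.Ioc (0:ℝ) 1, ∀ x ∈ Metric.ball (0:ℂ) r, ‖F' x t‖ ≤ bound t := by
    intro t ht x hx
    have m1 : ((1 - t : ℝ) : ℂ) * x ∈ K :=
      hmemK (1 - t) (by rw [abs_le]; exact ⟨by linarith [ht.2], by linarith [ht.1]⟩) x hx
    have m2 : ((t : ℝ) : ℂ) * x ∈ K :=
      hmemK t (by rw [abs_le]; exact ⟨by linarith [ht.1], ht.2⟩) x hx
    have e1 : ‖(deriv g₁ (((1 - t : ℝ) : ℂ) * x) * ((1 - t : ℝ) : ℂ)) * g₂ (((t : ℝ) : ℂ) * x)‖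
        ≤ D₁ * C₂ := by
      rw [norm_mul, norm_mul]
      have t1 : ‖deriv g₁ (((1 - t : ℝ) : ℂ) * x)‖ * ‖((1 - t : ℝ) : ℂ)‖ ≤ D₁ * 1 :=
        mul_le_mul (hD₁ _ m1) (hnorm_1t t ht) (norm_nonneg _) hD₁0
      rw [mul_one] at t1
      exact mul_le_mul t1 (hC₂ _ m2) (norm_nonneg _) hD₁0
    have e2 : ‖g₁ (((1 - t : ℝ) : ℂ) * x) * (deriv g₂ (((t : ℝ) : ℂ) * x) * ((t : ℝ) : ℂ))‖
        ≤ C₁ * D₂ := by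
      rw [norm_mul, norm_mul]
      have t1 : ‖deriv g₂ (((t : ℝ) : ℂ) * x)‖ * ‖((t : ℝ) : ℂ)‖ ≤ D₂ * 1 :=
        mul_le_mul (hD₂ _ m2) (hnorm_t t ht) (norm_nonneg _) hD₂0
      rw [mul_one] at t1
      exact mul_le_mul (hC₁ _ m1) t1 (by positivity) hC₁0
    simp only [hF'_def, hbound_def, norm_mul]
    rw [← hcB t, hc_def]
    simp only [norm_mul]
    exact mul_le_mul_of_nonneg_left
      (le_trans (norm_add_le _ _) (add_le_add e1 e2))
      (mul_nonneg (norm_nonneg _) (norm_nonneg _))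
  -- differentiability of ζ ↦ F ζ t
  have h_diff : ∀ t ∈ Set.Ioc (0:ℝ) 1, ∀ x ∈ Metric.ball (0:ℂ) r,
      HasDerivAt (fun ζ => F ζ t) (F' x t) x := by
    intro t ht x hx
    have m1 : ((1 - t : ℝ) : ℂ) * x ∈ Metric.ball (0:ℂ) r₀ :=
      hKsub (hmemK (1 - t) (by rw [abs_le]; exact ⟨by linarith [ht.2], by linarith [ht.1]⟩) x hx)
    have m2 : ((t : ℝ) : ℂ) * x ∈ Metric.ball (0:ℂ) r₀ :=
      hKsub (hmemK t (by rw [abs_le]; exact ⟨by linarith [ht.1], ht.2⟩) x hx)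
    have hlin1 : HasDerivAt (fun ζ : ℂ => ((1 - t : ℝ) : ℂ) * ζ) ((1 - t : ℝ) : ℂ) x := by
      simpa using (hasDerivAt_id x).const_mul (((1 - t : ℝ) : ℂ))
    have hlin2 : HasDerivAt (fun ζ : ℂ => ((t : ℝ) : ℂ) * ζ) ((t : ℝ) : ℂ) x := by
      simpa using (hasDerivAt_id x).const_mul (((t : ℝ) : ℂ))
    have hd1 : HasDerivAt (fun ζ : ℂ => g₁ (((1 - t : ℝ) : ℂ) * ζ))
        (deriv g₁ (((1 - t : ℝ) : ℂ) * x) * ((1 - t : ℝ) : ℂ)) x :=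
      ((hg₁ _ m1).differentiableAt.hasDerivAt).comp x hlin1
    have hd2 : HasDerivAt (fun ζ : ℂ => g₂ (((t : ℝ) : ℂ) * ζ))
        (deriv g₂ (((t : ℝ) : ℂ) * x) * ((t : ℝ) : ℂ)) x :=
      ((hg₂ _ m2).differentiableAt.hasDerivAt).comp x hlin2
    simpa [hF_def, hF'_def] using ((hd1.mul hd2).const_mul (c t))
  -- integrability of F x₀
  have hF_int : ∀ x ∈ Metric.ball (0:ℂ) r, IntervalIntegrable (F x) volume 0 1 := by
    intro x hx
    refine (hBint.norm.mul_const (C₁ * C₂)).mono_fun ((hF_meas x hx)) ?_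
    rw [hIoc]
    refine (ae_restrict_iff' measurableSet_Ioc).2 (Filter.Eventually.of_forall ?_)
    intro t ht
    have m1 : ((1 - t : ℝ) : ℂ) * x ∈ K :=
      hmemK (1 - t) (by rw [abs_le]; exact ⟨by linarith [ht.2], by linarith [ht.1]⟩) x hx
    have m2 : ((t : ℝ) : ℂ) * x ∈ K :=
      hmemK t (by rw [abs_le]; exact ⟨by linarith [ht.1], ht.2⟩) x hx
    simp only [hF_def, norm_mul, Real.norm_eq_abs, abs_norm, abs_mul,
      _root_.abs_of_nonneg hC₁0, _root_.abs_of_nonneg hC₂0]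
    rw [← hcB t]
    refine mul_le_mul_of_nonneg_left ?_ (norm_nonneg _)
    exact mul_le_mul (hC₁ _ m1) (hC₂ _ m2) (norm_nonneg _) hC₁0
  -- the key derivative statement
  have key : ∀ ζ₀ ∈ Metric.ball (0:ℂ) r,
      HasDerivAt (fun ζ => ∫ t in (0:ℝ)..1, F ζ t) (∫ t in (0:ℝ)..1, F' ζ₀ t) ζ₀ := by
    intro ζ₀ hζ₀
    have hε : 0 < r - dist ζ₀ 0 := by
      simp only [Metric.mem_ball] at hζ₀; linarith
    have hsub : Metric.ball ζ₀ (r - dist ζ₀ 0) ⊆ Metric.ball (0:ℂ) r := by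
      intro z hz
      simp only [Metric.mem_ball] at *
      calc dist z 0 ≤ dist z ζ₀ + dist ζ₀ 0 := dist_triangle _ _ _
        _ < r := by linarith
    refine (intervalIntegral.hasDerivAt_integral_of_dominated_loc_of_deriv_le (Metric.ball_mem_nhds ζ₀ hε)
      (Filter.eventually_of_mem (Metric.ball_mem_nhds ζ₀ hε) ?_)
      (hF_int ζ₀ hζ₀) (hF'_meas ζ₀ hζ₀) ?_ hbound_int ?_).2
    · intro x hx; exact hF_meas x (hsub hx)
    · refine Filter.Eventually.of_forall (fun t ht x hx => ?_)
      rw [hIoc] at ht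
      exact h_bound t ht x (hsub hx)
    · refine Filter.Eventually.of_forall (fun t ht x hx => ?_)
      rw [hIoc] at ht
      exact h_diff t ht x (hsub hx)
  -- assemble
  refine ⟨r, hr, fun ζ => ∫ t in (0:ℝ)..1, F ζ t, ?_, ?_⟩
  · refine DifferentiableOn.analyticOnNhd ?_ Metric.isOpen_ball
    intro ζ₀ hζ₀
    exact ((key ζ₀ hζ₀).differentiableAt).differentiableWithinAt
  · intro ζ hζ hζ0
    have hpow : ζ ^ β₁ * ζ ^ β₂ * ζ = ζ ^ (β₁ + β₂ + 1) := by
      rw [cpow_add _ _ hζ0, cpow_add _ _ hζ0, cpow_one]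
    calc (∫ t in (0:ℝ)..1,
          (((1 - t : ℝ) : ℂ) ^ β₁ * ζ ^ β₁ * g₁ (((1 - t : ℝ) : ℂ) * ζ)) *
          (((t : ℝ) : ℂ) ^ β₂ * ζ ^ β₂ * g₂ (((t : ℝ) : ℂ) * ζ)) * ζ)
        = ∫ t in (0:ℝ)..1, ζ ^ (β₁ + β₂ + 1) * F ζ t := by
          refine intervalIntegral.integral_congr (fun t _ => ?_)
          simp only [hF_def, hc_def]
          rw [← hpow]; ring
      _ = ζ ^ (β₁ + β₂ + 1) * ∫ t in (0:ℝ)..1, F ζ t :=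
          intervalIntegral.integral_const_mul _ _
end

section
/- Let Re β ≥ 0. The operator C_{id-1} - Id : φ̃(z) ↦ φ̃(z-1) - φ̃(z) maps z^{-β-1}ℂ[[z^{-1}]] into z^{-β-2}ℂ[[z^{-1}]] bijectively. -/
open Finset

/-- Coefficient of `w^k` in the binomial series `(1-w)^{-n-β-1}`. -/
noncomputable def binomCoeff (β : ℂ) (n k : ℕ) : ℂ :=
  (∏ j ∈ Finset.range k, ((n : ℂ) + β + 1 + (j : ℂ))) / (k.factorial : ℂ)

/-- The operator `C_{id-1} - Id : φ̃(z) ↦ φ̃(z-1) - φ̃(z)`, acting on coefficients: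
a series `z^{-β-1}∑ c_n z^{-n}` is sent to `z^{-β-2}∑ (Tmap β c)_m z^{-m}`. -/
noncomputable def Tmap (β : ℂ) (c : ℕ → ℂ) : ℕ → ℂ :=
  fun m => ∑ n ∈ Finset.range (m + 1), c n * binomCoeff β n (m + 1 - n)

lemma binomCoeff_one (β : ℂ) (n : ℕ) : binomCoeff β n 1 = (n : ℂ) + β + 1 := by
  simp [binomCoeff]

lemma diag_ne_zero (β : ℂ) (hβ : 0 ≤ β.re) (m : ℕ) : (m : ℂ) + β + 1 ≠ 0 := by
  intro h
  have := congrArg Complex.re h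
  simp [Complex.add_re] at this
  have : (m : ℝ) + β.re + 1 = 0 := by simpa using this
  have hm : (0 : ℝ) ≤ (m : ℝ) := Nat.cast_nonneg m
  linarith

lemma Tmap_eq (β : ℂ) (c : ℕ → ℂ) (m : ℕ) :
    Tmap β c m = (∑ n ∈ Finset.range m, c n * binomCoeff β n (m + 1 - n))
      + c m * ((m : ℂ) + β + 1) := by
  rw [Tmap, Finset.sum_range_succ]
  congr 1
  rw [show m + 1 - m = 1 from by omega, binomCoeff_one]

noncomputable def invMap (β : ℂ) (d : ℕ → ℂ) : ℕ → ℂ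
  | m => (d m - ∑ n ∈ (Finset.range m).attach,
      invMap β d n * binomCoeff β (n : ℕ) (m + 1 - (n : ℕ))) / ((m : ℂ) + β + 1)
  decreasing_by exact Finset.mem_range.mp n.2

lemma invMap_eq (β : ℂ) (d : ℕ → ℂ) (m : ℕ) :
    invMap β d m = (d m - ∑ n ∈ Finset.range m,
      invMap β d n * binomCoeff β n (m + 1 - n)) / ((m : ℂ) + β + 1) := by
  rw [invMap, Finset.sum_attach (Finset.range m) (fun n => invMap β d n * binomCoeff β n (m + 1 - n))]

/-- for `Re β ≥ 0`, the operator `C_{id-1} - Id` maps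
`z^{-β-1}ℂ[[z^{-1}]]` into `z^{-β-2}ℂ[[z^{-1}]]` bijectively. -/
theorem shift_minus_id_bijective (β : ℂ) (hβ : 0 ≤ β.re) :
    Function.Bijective (Tmap β) := by
  constructor
  · intro c c' h
    funext m
    induction m using Nat.strong_induction_on with
    | _ m ih =>
      have hm := congrFun h m
      rw [Tmap_eq, Tmap_eq] at hm
      have hsum : ∑ n ∈ Finset.range m, c n * binomCoeff β n (m + 1 - n)
          = ∑ n ∈ Finset.range m, c' n * binomCoeff β n (m + 1 - n) :=
        Finset.sum_congr rfl fun n hn => by rw [ih n (Finset.mem_range.mp hn)]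
      rw [hsum] at hm
      have := add_left_cancel hm
      exact mul_right_cancel₀ (diag_ne_zero β hβ m) this
  · intro d
    refine ⟨invMap β d, funext fun m => ?_⟩
    rw [Tmap_eq, invMap_eq, div_mul_cancel₀ _ (diag_ne_zero β hβ m)]
    ring
end

section
/- Uniqueness for the linearized Abel-type equation: given b ∈ z^{-1}ℂ{z^{-1}} and b_N ∈ z^{-N-2}ℂ[[z^{-1}]], the equation ψ̃(z-1) - ψ̃(z+b(z)) = b_N(z) has at most one solution ψ̃ in z^{-1}ℂ[[z^{-1}]]; if a solution exists it lies in z^{-N-1}ℂ[[z^{-1}]]. -/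
open PowerSeries Finset

/-- Substitution `f(g(w))` of a power series `g` with zero constant term into `f`
(coefficientwise; the formula below is the correct one when `constantCoeff g = 0`). -/
noncomputable def subs (g f : PowerSeries ℂ) : PowerSeries ℂ :=
  PowerSeries.mk fun n =>
    ∑ k ∈ Finset.range (n + 1), (PowerSeries.coeff k f) * PowerSeries.coeff n (g ^ k)


lemma coeff_one_mul (a b : PowerSeries ℂ) :
    PowerSeries.coeff 1 (a * b) =
      PowerSeries.constantCoeff a * PowerSeries.coeff 1 b +
        PowerSeries.coeff 1 a * PowerSeries.constantCoeff b := by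
  rw [PowerSeries.coeff_mul, Finset.Nat.sum_antidiagonal_eq_sum_range_succ_mk]
  simp [Finset.sum_range_succ, PowerSeries.coeff_zero_eq_constantCoeff]

lemma coeff_one_pow (f : PowerSeries ℂ) (hf : PowerSeries.constantCoeff f = 1) (k : ℕ) :
    PowerSeries.coeff 1 (f ^ k) = k * PowerSeries.coeff 1 f := by
  induction k with
  | zero => simp
  | succ k ih =>
      rw [pow_succ, coeff_one_mul, ih, map_pow, hf]
      push_cast
      ring

lemma coeff_pow_lt (u : PowerSeries ℂ) (k n : ℕ) (h : n < k) :
    PowerSeries.coeff n ((PowerSeries.X * u) ^ k) = 0 := by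
  rw [mul_pow, PowerSeries.coeff_X_pow_mul' (u^k) k n, if_neg (by omega)]

lemma coeff_pow_eq (u : PowerSeries ℂ) (k : ℕ) :
    PowerSeries.coeff k ((PowerSeries.X * u) ^ k) =
      (PowerSeries.constantCoeff u) ^ k := by
  rw [mul_pow]
  have h := PowerSeries.coeff_X_pow_mul' (u ^ k) k k
  simp only [le_refl, if_pos, Nat.sub_self] at h
  rw [h, PowerSeries.coeff_zero_eq_constantCoeff, map_pow]

lemma subs_sub (g f₁ f₂ : PowerSeries ℂ) :
    subs g (f₁ - f₂) = subs g f₁ - subs g f₂ := by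
  ext n
  simp [subs, Finset.sum_sub_distrib, sub_mul]

lemma coeff_one_u₁ : PowerSeries.coeff 1 ((1 - PowerSeries.X : PowerSeries ℂ)⁻¹) = 1 := by
  have h0 : PowerSeries.constantCoeff (1 - PowerSeries.X : PowerSeries ℂ) = 1 := by simp
  have h := PowerSeries.inv_mul_cancel ((1 : PowerSeries ℂ) - PowerSeries.X) (by rw [h0]; norm_num)
  have h1 := congrArg (PowerSeries.coeff 1) h
  rw [coeff_one_mul] at h1
  simp [h0, PowerSeries.constantCoeff_inv] at h1
  linear_combination h1

lemma coeff_one_u₂ (btilde : PowerSeries ℂ) (hb : PowerSeries.constantCoeff btilde = 0) :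
    PowerSeries.coeff 1 ((1 + PowerSeries.X * btilde : PowerSeries ℂ)⁻¹) = 0 := by
  have h0 : PowerSeries.constantCoeff (1 + PowerSeries.X * btilde) = 1 := by simp
  have h := PowerSeries.inv_mul_cancel ((1 : PowerSeries ℂ) + PowerSeries.X * btilde) (by rw [h0]; norm_num)
  have h1 := congrArg (PowerSeries.coeff 1) h
  rw [coeff_one_mul] at h1
  have hX : PowerSeries.coeff 1 (1 + PowerSeries.X * btilde) = 0 := by
    have := PowerSeries.coeff_succ_X_mul 0 btilde
    simp [this, hb]
  simp [h0, hX, PowerSeries.constantCoeff_inv] at h1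
  exact h1

lemma key (btilde : PowerSeries ℂ) (hb : PowerSeries.constantCoeff btilde = 0)
    (ψ : PowerSeries ℂ) (m : ℕ) (hψ : ∀ k ≤ m, PowerSeries.coeff k ψ = 0) :
    PowerSeries.coeff (m + 2)
        (subs (PowerSeries.X * (1 - PowerSeries.X)⁻¹) ψ -
          subs (PowerSeries.X * (1 + PowerSeries.X * btilde)⁻¹) ψ) =
      (m + 1) * PowerSeries.coeff (m + 1) ψ := by
  set u₁ : PowerSeries ℂ := (1 - PowerSeries.X)⁻¹ with hu₁
  set u₂ : PowerSeries ℂ := (1 + PowerSeries.X * btilde)⁻¹ with hu₂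
  have hc₁ : PowerSeries.constantCoeff u₁ = 1 := by
    rw [hu₁, PowerSeries.constantCoeff_inv]; simp
  have hc₂ : PowerSeries.constantCoeff u₂ = 1 := by
    rw [hu₂, PowerSeries.constantCoeff_inv]; simp
  rw [map_sub]
  simp only [subs, PowerSeries.coeff_mk]
  rw [← Finset.sum_sub_distrib]
  have hcoe : ∀ (u : PowerSeries ℂ) (k : ℕ), k ≤ m + 2 → k ≠ m + 1 → k ≠ m + 2 →
      True := fun _ _ _ _ _ => trivial
  rw [Finset.sum_eq_single (m + 1)]
  · -- main term
    have e₁ : PowerSeries.coeff (m + 2) ((PowerSeries.X * u₁) ^ (m + 1)) = (m + 1 : ℂ) := by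
      rw [mul_pow, PowerSeries.coeff_X_pow_mul' (u₁ ^ (m + 1)) (m + 1) (m + 2),
        if_pos (by omega)]
      have : m + 2 - (m + 1) = 1 := by omega
      rw [this, coeff_one_pow u₁ hc₁, coeff_one_u₁]
      push_cast; ring
    have e₂ : PowerSeries.coeff (m + 2) ((PowerSeries.X * u₂) ^ (m + 1)) = 0 := by
      rw [mul_pow, PowerSeries.coeff_X_pow_mul' (u₂ ^ (m + 1)) (m + 1) (m + 2),
        if_pos (by omega)]
      have : m + 2 - (m + 1) = 1 := by omega
      rw [this, coeff_one_pow u₂ hc₂, coeff_one_u₂ btilde hb, mul_zero]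
    rw [e₁, e₂]
    ring
  · intro k hk hne
    rw [Finset.mem_range] at hk
    rcases Nat.lt_or_ge k (m + 1) with h | h
    · rw [hψ k (by omega)]; ring
    · have hk2 : k = m + 2 := by omega
      subst hk2
      rw [coeff_pow_eq u₁, coeff_pow_eq u₂, hc₁, hc₂]
      ring
  · intro h
    exact absurd (Finset.mem_range.mpr (by omega)) h

lemma vanish (btilde bN : PowerSeries ℂ) (N : ℕ)
    (hb : PowerSeries.constantCoeff btilde = 0)
    (hbN : ∀ n < N + 2, PowerSeries.coeff n bN = 0)
    (ψ : PowerSeries ℂ) (hψ0 : PowerSeries.constantCoeff ψ = 0)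
    (heq : subs (PowerSeries.X * (1 - PowerSeries.X)⁻¹) ψ -
        subs (PowerSeries.X * (1 + PowerSeries.X * btilde)⁻¹) ψ = bN) :
    ∀ n < N + 1, PowerSeries.coeff n ψ = 0 := by
  intro n
  induction n using Nat.strong_induction_on with
  | _ n ih =>
    intro hn
    match n with
    | 0 => simpa using hψ0
    | m + 1 =>
      have h := key btilde hb ψ m (fun k hk => ih k (by omega) (by omega))
      rw [heq, hbN (m + 2) (by omega)] at h
      have : ((m : ℂ) + 1) ≠ 0 := by
        exact_mod_cast Nat.cast_add_one_ne_zero (R := ℂ) m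
      exact (mul_eq_zero.mp h.symm).resolve_left this

/-- uniqueness for the linearized Abel-type equation
`ψ̃(z-1) - ψ̃(z+b(z)) = b_N(z)`. Formal series in `z^{-1}` are written as power
series in `w = z^{-1}`; `C_{id-1}` and `C_{id+b}` are `subs g₁`, `subs g₂` with
`g₁ = w/(1-w)`, `g₂ = w/(1+w b̃)`, `b̃ ∈ wℂ[[w]]`. For `b_N ∈ z^{-N-2}ℂ[[z^{-1}]]`
the equation has at most one solution `ψ̃ ∈ z^{-1}ℂ[[z^{-1}]]`, and any solution
lies in `z^{-N-1}ℂ[[z^{-1}]]`. -/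
theorem linearized_equation_uniqueness (btilde bN : PowerSeries ℂ) (N : ℕ)
    (hb : PowerSeries.constantCoeff btilde = 0)
    (hbN : ∀ n < N + 2, PowerSeries.coeff n bN = 0)
    (g₁ g₂ : PowerSeries ℂ)
    (hg₁ : g₁ = PowerSeries.X * (1 - PowerSeries.X)⁻¹)
    (hg₂ : g₂ = PowerSeries.X * (1 + PowerSeries.X * btilde)⁻¹) :
    (∀ ψ₁ ψ₂ : PowerSeries ℂ,
        PowerSeries.constantCoeff ψ₁ = 0 → PowerSeries.constantCoeff ψ₂ = 0 →
        subs g₁ ψ₁ - subs g₂ ψ₁ = bN → subs g₁ ψ₂ - subs g₂ ψ₂ = bN → ψ₁ = ψ₂) ∧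
    ∀ ψ : PowerSeries ℂ, PowerSeries.constantCoeff ψ = 0 →
      subs g₁ ψ - subs g₂ ψ = bN → ∀ n < N + 1, PowerSeries.coeff n ψ = 0 := by

  subst hg₁ hg₂
  refine ⟨fun ψ₁ ψ₂ h01 h02 he1 he2 => ?_, vanish btilde bN N hb hbN⟩
  have hψ0 : PowerSeries.constantCoeff (ψ₁ - ψ₂) = 0 := by
    rw [map_sub, h01, h02, sub_zero]
  have heq : subs (PowerSeries.X * (1 - PowerSeries.X)⁻¹) (ψ₁ - ψ₂) -
      subs (PowerSeries.X * (1 + PowerSeries.X * btilde)⁻¹) (ψ₁ - ψ₂) = 0 := by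
    rw [subs_sub, subs_sub]
    linear_combination he1 - he2
  ext n
  have h := vanish btilde 0 n hb (by simp) (ψ₁ - ψ₂) hψ0 heq n (by omega)
  rw [map_sub, sub_eq_zero] at h
  exact h
end

section
/- Let φ̂ be holomorphic near 0 of the form ζ^β g(ζ) with g holomorphic, g(0) ≠ 0, Re β ≥ 0, and let γ: (0,ℓ] → ℂ be a naturally parametrized path with γ(s) = s e^{iθ} for s ≤ ε, staying at distance > ε from 2πiℤ∖{0} for s ≥ ε, along which φ̂ admits analytic continuation with |cont_γ φ̂(γ(s))| ≤ C s^{Re β + ℓ₀} for some ℓ₀ ≥ 0. Then the function ζ ↦ φ̂(ζ)/(e^ζ - 1) admits analytic continuation along γ and satisfies |cont_γ (φ̂/(e^ζ-1))(γ(s))| ≤ C M₀ κ^{-1} s^{Re β + ℓ₀ - 1} for constants M₀, κ depending only on ε and the length bound L, where κ s ≤ |γ(s)| and M₀ bounds |ζ/(e^ζ-1)| on the relevant region. -/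
open Complex Real Set

/-- dividing (the analytic continuation `Φ` along `γ` of) a germ
`φ̂ = ζ^β g(ζ)` by `e^ζ - 1` preserves analytic continuability along paths avoiding
`2πiℤ` and costs exactly one power of `s` in the bounds:
`|cont_γ(φ̂/(e^ζ-1))(γ(s))| ≤ C M₀ κ⁻¹ s^{Re β + ℓ₀ - 1}`, where `κ s ≤ |γ(s)|`
and `M₀` bounds `|ζ/(e^ζ-1)|` on the relevant region. -/
theorem division_by_exp_minus_one_along_path
    (β : ℂ) (hβ : 0 ≤ β.re) (g : ℂ → ℂ) (hg : AnalyticAt ℂ g 0) (hg0 : g 0 ≠ 0)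
    (ε L len κ M₀ C ℓ₀ θ : ℝ)
    (hε : ε ∈ Set.Ioo (0:ℝ) 1) (hL : 1 < L) (hlen : len ∈ Set.Ioo (0:ℝ) L)
    (hκ : 0 < κ) (hℓ₀ : 0 ≤ ℓ₀) (hC : 0 ≤ C) (hM₀pos : 0 ≤ M₀)
    (γ : ℝ → ℂ) (U : Set ℂ) (Φ : ℂ → ℂ)
    (hU : IsOpen U) (hΦ : DifferentiableOn ℂ Φ U)
    (hγU : ∀ s ∈ Set.Ioc (0:ℝ) len, γ s ∈ U)
    (hray : ∀ s ∈ Set.Ioc (0:ℝ) len, s ≤ ε → γ s = (s : ℂ) * Complex.exp (θ * I))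
    (hdist : ∀ s ∈ Set.Ioc (0:ℝ) len, ε ≤ s →
      ∀ k : ℤ, k ≠ 0 → ε < ‖γ s - 2 * π * I * (k : ℂ)‖)
    (hΦg : ∀ s ∈ Set.Ioc (0:ℝ) len, s ≤ ε → Φ (γ s) = (γ s) ^ β * g (γ s))
    (hbound : ∀ s ∈ Set.Ioc (0:ℝ) len, ‖Φ (γ s)‖ ≤ C * s ^ (β.re + ℓ₀))
    (hκγ : ∀ s ∈ Set.Ioc (0:ℝ) len, κ * s ≤ ‖γ s‖)
    (hγL : ∀ s ∈ Set.Ioc (0:ℝ) len, ‖γ s‖ < L)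
    (hM₀ : ∀ ζ : ℂ, ‖ζ‖ < L →
      (∀ k : ℤ, k ≠ 0 → ε < ‖ζ - 2 * π * I * (k : ℂ)‖) →
      ‖ζ / (Complex.exp ζ - 1)‖ ≤ M₀) :
    DifferentiableOn ℂ (fun ζ => Φ ζ / (Complex.exp ζ - 1))
        (U \ {ζ : ℂ | ∃ k : ℤ, ζ = 2 * π * I * (k : ℂ)}) ∧
      ∀ s ∈ Set.Ioc (0:ℝ) len,
        ‖Φ (γ s) / (Complex.exp (γ s) - 1)‖ ≤ C * M₀ * κ⁻¹ * s ^ (β.re + ℓ₀ - 1) := by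
  constructor
  · apply DifferentiableOn.div
    · exact hΦ.mono Set.diff_subset
    · exact (Complex.differentiable_exp.sub (differentiable_const 1)).differentiableOn
    · rintro ζ ⟨hζU, hζS⟩
      rw [sub_ne_zero]
      intro h
      rcases Complex.exp_eq_one_iff.mp h with ⟨n, hn⟩
      exact hζS ⟨n, by rw [hn]; ring⟩
  · intro s hs
    have hs0 : 0 < s := hs.1
    have hx := hκγ s hs
    have hxpos : 0 < ‖γ s‖ := lt_of_lt_of_le (by positivity) hx
    have hdist' : ∀ k : ℤ, k ≠ 0 → ε < ‖γ s - 2 * π * I * (k : ℂ)‖ := by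
      rcases le_total ε s with h | h
      · exact hdist s hs h
      · intro k hk
        have habs : ‖γ s‖ = s := by
          rw [hray s hs h]
          simp [Complex.norm_exp, Complex.norm_real, abs_of_pos hs0]
        have hk1 : (1:ℝ) ≤ |(k:ℝ)| := by
          have : (1:ℤ) ≤ |k| := Int.one_le_abs hk
          exact_mod_cast this
        have h2πk : 2 * π ≤ ‖2 * π * I * (k : ℂ)‖ := by
          have heq : ‖2 * π * I * (k : ℂ)‖ = 2 * π * |(k:ℝ)| := by
            rw [norm_mul, norm_mul, norm_mul]
            simp [Complex.norm_real, abs_of_pos Real.pi_pos, Complex.norm_intCast]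
          rw [heq]
          nlinarith [Real.pi_pos]
        have htri : ‖2 * π * I * (k : ℂ)‖ - ‖γ s‖
            ≤ ‖γ s - 2 * π * I * (k : ℂ)‖ := by
          calc ‖2 * π * I * (k : ℂ)‖ - ‖γ s‖
              ≤ ‖2 * π * I * (k : ℂ) - γ s‖ :=
                norm_sub_norm_le _ _
            _ = ‖γ s - 2 * π * I * (k : ℂ)‖ := by
                rw [norm_sub_rev]
        have hpi : 3 < π := Real.pi_gt_three
        have hε1 := hε.2
        have : ε < 2 * π - s := by nlinarith
        rw [habs] at htri
        linarith
    have hMs : ‖γ s / (Complex.exp (γ s) - 1)‖ ≤ M₀ :=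
      hM₀ (γ s) (hγL s hs) hdist'
    set d := Complex.exp (γ s) - 1 with hd
    have hRHS : 0 ≤ C * M₀ * κ⁻¹ * s ^ (β.re + ℓ₀ - 1) := by positivity
    by_cases hd0 : d = 0
    · simpa [hd0] using hRHS
    · have hdabs : 0 < ‖d‖ := norm_pos_iff.mpr hd0
      have h1 : ‖γ s‖ ≤ M₀ * ‖d‖ := by
        have : ‖γ s‖ / ‖d‖ ≤ M₀ := by
          rw [← norm_div]; exact hMs
        rwa [div_le_iff₀ hdabs] at this
      have key : κ * s ≤ M₀ * ‖d‖ := le_trans hx h1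
      have hinv : (‖d‖)⁻¹ ≤ M₀ / (κ * s) := by
        rw [le_div_iff₀ (by positivity : (0:ℝ) < κ * s)]
        have h3 : (‖d‖)⁻¹ * (κ * s) ≤ (‖d‖)⁻¹ * (M₀ * ‖d‖) :=
          mul_le_mul_of_nonneg_left key (by positivity)
        have h4 : (‖d‖)⁻¹ * (M₀ * ‖d‖) = M₀ := by
          field_simp
        linarith
      have hnorm : ‖Φ (γ s) / d‖ = ‖Φ (γ s)‖ * (‖d‖)⁻¹ := by
        rw [norm_div, div_eq_mul_inv]
      rw [hnorm]
      have hmul : ‖Φ (γ s)‖ * (‖d‖)⁻¹ ≤ (C * s ^ (β.re + ℓ₀)) * (M₀ / (κ * s)) :=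
        mul_le_mul (hbound s hs) hinv (by positivity) (by positivity)
      refine hmul.trans (le_of_eq ?_)
      rw [Real.rpow_sub_one (ne_of_gt hs0)]
      field_simp
end
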